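/- Let A be an integral domain with fraction field K, and let v : K → Γ ∪ {0} be a (multiplicatively written) valuation on K with values in a linearly ordered abelian group Γ with zero adjoined. Suppose the set v(A) of values of elements of A is not bounded above in Γ ∪ {0}, but the set v(A^×) of values of units of A is bounded above. Then for every nonconstant polynomial F ∈ A[Y] there exists b ∈ A with F(b) not a unit of A. -/

import Mathlib

theorem stmt_4 {A K Γ₀ : Type*} [CommRing A] [IsDomain A] [Field K] [Algebra A K]
    [IsFractionRing A K] [LinearOrderedCommGroupWithZero Γ₀]
    (v : Valuation K Γ₀)
    (hA : ¬ ∃ γ : Γ₀, ∀ a : A, v (algebraMap A K a) ≤ γ)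
    (hAunits : ∃ γ : Γ₀, ∀ u : Aˣ, v (algebraMap A K (u : A)) ≤ γ)
    (F : Polynomial A) (hF : 0 < F.natDegree) :
    ∃ b : A, ¬ IsUnit (F.eval b) := by
  push_neg at hA
  obtain ⟨γ, hγ⟩ := hAunits
  set φ := algebraMap A K with hφ
  set n := F.natDegree with hn
  set c := F.leadingCoeff with hc
  have hc0 : c ≠ 0 := Polynomial.leadingCoeff_ne_zero.mpr (by
    intro h; simp [hn, h] at hF)
  have hvc : v (φ c) ≠ 0 := by
    rw [Valuation.ne_zero_iff]
    exact (map_ne_zero_iff φ (IsFractionRing.injective A K)).mpr hc0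
  letI : OrderBot Γ₀ := { bot := 0, bot_le := fun a => zero_le' }
  set M := (Finset.range n).sup (fun i => v (φ (F.coeff i))) with hM
  obtain ⟨b, hb⟩ := hA (max 1 (max γ M / v (φ c)))
  set t := v (φ b) with ht
  have h1t : 1 < t := lt_of_le_of_lt (le_max_left _ _) hb
  have ht0 : t ≠ 0 := (zero_lt_one.trans h1t).ne'
  have hbig : max γ M < v (φ c) * t := by
    have := lt_of_le_of_lt (le_max_right 1 ((γ ⊔ M) / v (φ c))) hb
    rwa [div_lt_iff₀' (zero_lt_iff.mpr hvc)] at this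
  have htn : t ≤ t ^ n := by
    calc t = t ^ 1 := (pow_one t).symm
    _ ≤ t ^ n := pow_le_pow_right₀ h1t.le hF
  -- value of the leading term
  have hlead : v (φ c * φ b ^ n) = v (φ c) * t ^ n := by
    rw [Valuation.map_mul, Valuation.map_pow]
  have hct : v (φ c) * t ≤ v (φ c) * t ^ n :=
    mul_le_mul_right htn _
  -- lower terms are strictly smaller
  have hsmall : ∀ i ∈ Finset.range n, v (φ (F.coeff i) * φ b ^ i) < v (φ c) * t ^ n := by
    intro i hi
    rw [Finset.mem_range] at hi
    rw [Valuation.map_mul, Valuation.map_pow]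
    calc v (φ (F.coeff i)) * t ^ i ≤ M * t ^ (n - 1) := by
          apply mul_le_mul' (Finset.le_sup (f := fun i => v (φ (F.coeff i)))
            (Finset.mem_range.mpr hi))
          exact pow_le_pow_right₀ h1t.le (Nat.le_sub_one_of_lt hi)
      _ = t ^ (n - 1) * M := mul_comm _ _
      _ < t ^ (n - 1) * (v (φ c) * t) :=
          mul_lt_mul_of_pos_left (lt_of_le_of_lt (le_max_right γ M) hbig)
            (zero_lt_iff.mpr (pow_ne_zero _ ht0))
      _ = (v (φ c) * t) * t ^ (n - 1) := mul_comm _ _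
      _ = v (φ c) * t ^ (1 + (n - 1)) := by rw [pow_add, pow_one, mul_assoc]
      _ = v (φ c) * t ^ n := by rw [Nat.add_sub_cancel' hF]
  -- compute v (φ (F.eval b))
  have heval : v (φ (F.eval b)) = v (φ c) * t ^ n := by
    have : φ (F.eval b) = (∑ i ∈ Finset.range n, φ (F.coeff i) * φ b ^ i)
        + φ c * φ b ^ n := by
      rw [Polynomial.eval_eq_sum_range, map_sum, Finset.sum_range_succ]
      simp [Polynomial.coeff_natDegree, hc, map_mul, map_pow]
      rfl
    rw [this, Valuation.map_add_eq_of_lt_right, hlead]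
    rw [hlead]
    exact v.map_sum_lt (mul_ne_zero hvc (pow_ne_zero _ ht0)) hsmall
  -- conclude
  refine ⟨b, fun hu => ?_⟩
  obtain ⟨u, hu⟩ := hu
  have := hγ u
  rw [hu] at this
  rw [heval] at this
  exact absurd this (not_le.mpr
    (lt_of_le_of_lt (le_max_left γ M) (hbig.trans_le hct)))
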